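/- Let (Q,+) be a diassociative loop and let f, g, h be central endomorphisms of (Q,+). Then: (1) f + g is a central endomorphism of (Q,+); (2) f + (g + h) = (f + g) + h and f + g = g + f; (3) the zero endomorphism of (Q,+) is central; (4) -f is a central endomorphism of (Q,+); (5) f + (-f) = 0 and f + 0 = f; (6) the composition f∘g is a central endomorphism of (Q,+). -/

import Mathlib

/- Preamble: diassociative loops, written additively.
   A loop is a set with `+`, a neutral element `0`, and unique left/right
   solvability.  Diassociativity is stated as: the subloop generated by any
   two elements (closure under `+`, negation and both divisions) is
   associative; in particular every element has a two-sided inverse `-x`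
   (included as part of the structure, as it is uniquely determined). -/

universe u

section Preamble
variable {Q : Type u}

/-- Membership in the subloop of `Q` generated by the pair `a, b`
    (closure under `0`, negation, addition and both divisions). -/
inductive GenBy [Add Q] [Zero Q] [Neg Q] (a b : Q) : Q → Prop
  | base_left : GenBy a b a
  | base_right : GenBy a b b
  | zero : GenBy a b 0
  | neg : ∀ x, GenBy a b x → GenBy a b (-x)
  | add : ∀ x y, GenBy a b x → GenBy a b y → GenBy a b (x + y)
  | ldiv : ∀ x y z, GenBy a b x → GenBy a b y → x + z = y → GenBy a b z
  | rdiv : ∀ x y z, GenBy a b x → GenBy a b y → z + x = y → GenBy a b z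

/-- A diassociative loop `(Q,+)`: a loop in which the subloop generated by
    any pair of elements is a group (stated as associativity on that
    subloop); every element has a two-sided inverse `-x`. -/
class DiassocLoop (Q : Type u) extends Add Q, Zero Q, Neg Q where
  zero_add : ∀ x : Q, 0 + x = x
  add_zero : ∀ x : Q, x + 0 = x
  exu_left : ∀ a b : Q, ∃! x : Q, a + x = b
  exu_right : ∀ a b : Q, ∃! y : Q, y + a = b
  neg_add_cancel : ∀ x : Q, -x + x = 0
  add_neg_cancel : ∀ x : Q, x + -x = 0
  diassoc : ∀ a b x y z : Q, GenBy a b x → GenBy a b y → GenBy a b z →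
      (x + y) + z = x + (y + z)

variable [Add Q] [Zero Q] [Neg Q]

/-- Natural multiple `n • x = x + (x + (⋯ + 0))`. -/
def nsmulL : ℕ → Q → Q
  | 0, _ => 0
  | n + 1, x => x + nsmulL n x

/-- Integer multiple `m • x` (unambiguous by diassociativity). -/
def zsmulL : ℤ → Q → Q
  | Int.ofNat n, x => nsmulL n x
  | Int.negSucc n, x => -(nsmulL (n + 1) x)

/-- `a` belongs to the nucleus `N(Q,+)`. -/
def inNucleus (a : Q) : Prop :=
  ∀ x y : Q, (a + x) + y = a + (x + y) ∧ (x + a) + y = x + (a + y) ∧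
    (x + y) + a = x + (y + a)

/-- `a` belongs to the Moufang center `K(Q,+)`. -/
def inMoufangCenter (a : Q) : Prop :=
  ∀ x y : Q, (a + a) + (x + y) = (a + x) + (a + y)

/-- `a` belongs to the center `Z(Q,+) = N(Q,+) ∩ K(Q,+)`. -/
def inCenter (a : Q) : Prop := inNucleus a ∧ inMoufangCenter a

/-- `f` is an endomorphism of `(Q,+)`. -/
def IsEndo (f : Q → Q) : Prop := ∀ x y : Q, f (x + y) = f x + f y

/-- `f` is a central endomorphism of `(Q,+)`: an endomorphism with
    `f(Q) ⊆ Z(Q,+)`. -/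
def IsCentralEndo (f : Q → Q) : Prop := IsEndo f ∧ ∀ x : Q, inCenter (f x)

/-- `f` is an `m`-quasicentral endomorphism of `(Q,+)`:
    `m•x + f(x) ∈ Z(Q,+)` for all `x`. -/
def IsQuasicentral (m : ℤ) (f : Q → Q) : Prop :=
  IsEndo f ∧ ∀ x : Q, inCenter (zsmulL m x + f x)

end Preamble

section Helpers
variable {Q : Type u} [DiassocLoop Q]

lemma my_lcancel {a x y : Q} (h : a + x = a + y) : x = y := by
  obtain ⟨z, _, hu⟩ := DiassocLoop.exu_left a (a + y)
  exact (hu x h).trans (hu y rfl).symm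

lemma my_rcancel {a x y : Q} (h : x + a = y + a) : x = y := by
  obtain ⟨z, _, hu⟩ := DiassocLoop.exu_right a (y + a)
  exact (hu x h).trans (hu y rfl).symm

/-- Central elements commute with everything. -/
lemma cent_comm {a : Q} (h : inCenter a) (x : Q) : a + x = x + a := by
  have hm := h.2 x 0
  rw [DiassocLoop.add_zero, DiassocLoop.add_zero] at hm
  have h1 := (h.1 a x).1
  have h2 := (h.1 a x).2.2
  exact my_lcancel ((h1.symm.trans hm).trans h2)

/-- Nucleus elements commuting with everything lie in the Moufang center. -/
lemma mkMoufang {b : Q} (hn : inNucleus b) (hc : ∀ x, b + x = x + b) :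
    inMoufangCenter b := by
  intro x y
  calc (b + b) + (x + y) = b + (b + (x + y)) := ((hn b (x+y)).1)
    _ = b + ((b + x) + y) := by rw [(hn x y).1]
    _ = (b + (b + x)) + y := ((hn (b+x) y).1).symm
    _ = ((b + x) + b) + y := by rw [hc (b+x)]
    _ = (b + x) + (b + y) := (hn (b+x) y).2.1

lemma mkCenter {b : Q} (hn : inNucleus b) (hc : ∀ x, b + x = x + b) :
    inCenter b := ⟨hn, mkMoufang hn hc⟩

lemma neg_comm' {a : Q} (h : inCenter a) (x : Q) : -a + x = x + -a := by
  apply my_lcancel (a := a)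
  have l1 : a + (-a + x) = x := by
    rw [((h.1 (-a) x).1).symm, DiassocLoop.add_neg_cancel, DiassocLoop.zero_add]
  have l2 : a + (x + -a) = x := by
    rw [((h.1 x (-a)).1).symm, cent_comm h x, (h.1 x (-a)).2.1,
      DiassocLoop.add_neg_cancel, DiassocLoop.add_zero]
  rw [l1, l2]

lemma neg_nucleus {a : Q} (h : inCenter a) : inNucleus (-a) := by
  have hn := h.1
  have first : ∀ x y : Q, (-a + x) + y = -a + (x + y) := by
    intro x y
    apply my_lcancel (a := a)
    have r1 : a + ((-a + x) + y) = x + y := by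
      rw [((hn (-a + x) y).1).symm, ((hn (-a) x).1).symm,
        DiassocLoop.add_neg_cancel, DiassocLoop.zero_add]
    have r2 : a + (-a + (x + y)) = x + y := by
      rw [((hn (-a) (x+y)).1).symm, DiassocLoop.add_neg_cancel,
        DiassocLoop.zero_add]
    rw [r1, r2]
  have third : ∀ x y : Q, (x + y) + -a = x + (y + -a) := by
    intro x y
    apply my_rcancel (a := a)
    have r1 : ((x + y) + -a) + a = x + y := by
      rw [(hn (x+y) (-a)).2.2, DiassocLoop.neg_add_cancel, DiassocLoop.add_zero]
    have r2 : (x + (y + -a)) + a = x + y := by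
      rw [(hn x (y + -a)).2.2, (hn y (-a)).2.2, DiassocLoop.neg_add_cancel,
        DiassocLoop.add_zero]
    rw [r1, r2]
  intro x y
  refine ⟨first x y, ?_, third x y⟩
  calc (x + -a) + y = (-a + x) + y := by rw [neg_comm' h x]
    _ = -a + (x + y) := first x y
    _ = (x + y) + -a := neg_comm' h (x + y)
    _ = x + (y + -a) := third x y
    _ = x + (-a + y) := by rw [neg_comm' h y]

lemma neg_center {a : Q} (h : inCenter a) : inCenter (-a) :=
  mkCenter (neg_nucleus h) (neg_comm' h)

lemma add_nucleus {a b : Q} (ha : inCenter a) (hb : inCenter b) :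
    inNucleus (a + b) := by
  have hna := ha.1; have hnb := hb.1
  intro x y
  refine ⟨?_, ?_, ?_⟩
  · calc ((a + b) + x) + y = (a + (b + x)) + y := by rw [(hna b x).1]
      _ = a + ((b + x) + y) := (hna (b+x) y).1
      _ = a + (b + (x + y)) := by rw [(hnb x y).1]
      _ = (a + b) + (x + y) := ((hna b (x+y)).1).symm
  · calc (x + (a + b)) + y = ((x + a) + b) + y := by rw [(hna x b).2.1]
      _ = (x + a) + (b + y) := (hnb (x+a) y).2.1
      _ = x + (a + (b + y)) := (hna x (b+y)).2.1
      _ = x + ((a + b) + y) := by rw [(hna b y).1]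
  · calc (x + y) + (a + b) = ((x + y) + a) + b := ((hna (x+y) b).2.1).symm
      _ = (x + (y + a)) + b := by rw [(hna x y).2.2]
      _ = x + ((y + a) + b) := (hnb x (y+a)).2.2
      _ = x + (y + (a + b)) := by rw [(hna y b).2.1]

lemma add_comm_cent' {a b : Q} (ha : inCenter a) (hb : inCenter b) (x : Q) :
    (a + b) + x = x + (a + b) := by
  calc (a + b) + x = a + (b + x) := (ha.1 b x).1
    _ = a + (x + b) := by rw [cent_comm hb x]
    _ = (a + x) + b := ((ha.1 x b).1).symm
    _ = (x + a) + b := by rw [cent_comm ha x]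
    _ = x + (a + b) := (ha.1 x b).2.1

lemma add_center {a b : Q} (ha : inCenter a) (hb : inCenter b) :
    inCenter (a + b) :=
  mkCenter (add_nucleus ha hb) (add_comm_cent' ha hb)

lemma my_neg_add' {a b : Q} (ha : inCenter a) (hb : inCenter b) :
    -(a + b) = -a + -b := by
  obtain ⟨z, _, hu⟩ := DiassocLoop.exu_left (a + b) 0
  have key : (a + b) + (-a + -b) = 0 := by
    calc (a + b) + (-a + -b) = a + (b + (-a + -b)) := (ha.1 b (-a + -b)).1
      _ = a + ((b + -a) + -b) := by rw [(hb.1 (-a) (-b)).1]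
      _ = a + ((-a + b) + -b) := by rw [neg_comm' ha b]
      _ = a + (-a + (b + -b)) := by rw [((neg_center ha).1 b (-b)).1]
      _ = a + (-a + 0) := by rw [DiassocLoop.add_neg_cancel]
      _ = a + -a := by rw [DiassocLoop.add_zero]
      _ = 0 := DiassocLoop.add_neg_cancel a
  exact (hu (-(a+b)) (DiassocLoop.add_neg_cancel (a+b))).trans (hu _ key).symm

/-- The medial rearrangement for four central elements. -/
lemma exchange {A B C D : Q} (hA : inCenter A) (hB : inCenter B)
    (hC : inCenter C) : (A + B) + (C + D) = (A + C) + (B + D) := by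
  calc (A + B) + (C + D) = A + (B + (C + D)) := (hA.1 B (C+D)).1
    _ = A + ((B + C) + D) := by rw [(hB.1 C D).1]
    _ = A + ((C + B) + D) := by rw [cent_comm hB C]
    _ = A + (C + (B + D)) := by rw [(hC.1 B D).1]
    _ = (A + C) + (B + D) := ((hA.1 C (B+D)).1).symm

lemma zero_center : inCenter (0 : Q) := by
  refine mkCenter ?_ ?_
  · intro x y
    refine ⟨?_, ?_, ?_⟩ <;>
      simp [DiassocLoop.zero_add, DiassocLoop.add_zero]
  · intro x
    rw [DiassocLoop.zero_add, DiassocLoop.add_zero]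

end Helpers

/- STATEMENT 0: Lemma 2.1.  For central endomorphisms `f, g, h` of a
   diassociative loop `(Q,+)`:
   (1) `f + g` is central, (2) addition is associative and commutative,
   (3) the zero endomorphism is central, (4) `-f` is central,
   (5) `f + (-f) = 0` and `f + 0 = f`, (6) `f ∘ g` is central. -/
theorem central_endomorphisms_ops {Q : Type u} [DiassocLoop Q] (f g h : Q → Q)
    (hf : IsCentralEndo f) (hg : IsCentralEndo g) (hh : IsCentralEndo h) :
    IsCentralEndo (fun x : Q => f x + g x) ∧
    ((fun x : Q => f x + (g x + h x)) = (fun x : Q => (f x + g x) + h x)) ∧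
    ((fun x : Q => f x + g x) = (fun x : Q => g x + f x)) ∧
    IsCentralEndo (fun _ : Q => (0 : Q)) ∧
    IsCentralEndo (fun x : Q => -(f x)) ∧
    ((fun x : Q => f x + -(f x)) = (fun _ : Q => (0 : Q))) ∧
    ((fun x : Q => f x + (0 : Q)) = f) ∧
    IsCentralEndo (f ∘ g) := by
  refine ⟨⟨?_, ?_⟩, ?_, ?_, ⟨?_, ?_⟩, ⟨?_, ?_⟩, ?_, ?_, ⟨?_, ?_⟩⟩
  · intro x y
    show f (x + y) + g (x + y) = _
    rw [hf.1 x y, hg.1 x y]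
    exact exchange (hf.2 x) (hf.2 y) (hg.2 x)
  · intro x
    exact add_center (hf.2 x) (hg.2 x)
  · funext x
    exact (((hf.2 x).1 (g x) (h x)).1).symm
  · funext x
    exact cent_comm (hf.2 x) (g x)
  · intro x y
    rw [DiassocLoop.zero_add]
  · intro x
    exact zero_center
  · intro x y
    show -(f (x + y)) = -(f x) + -(f y)
    rw [hf.1 x y, my_neg_add' (hf.2 x) (hf.2 y)]
  · intro x
    exact neg_center (hf.2 x)
  · funext x
    exact DiassocLoop.add_neg_cancel (f x)
  · funext x
    exact DiassocLoop.add_zero (f x)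
  · intro x y
    rw [Function.comp_apply, hg.1 x y, hf.1 (g x) (g y)]; rfl
  · intro x
    exact hf.2 (g x)
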